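/- For any vectors u, v, u′, v′ ∈ ℝⁿ, the following hold for every index i and j: (a) |log(a(u′,v′)ᵢ / a(u,v)ᵢ) − (u′ᵢ − uᵢ)/η| ≤ max_{1≤j≤n} |v′ⱼ − vⱼ|/η, and (b) |log(b(u′,v′)ⱼ / b(u,v)ⱼ) − (v′ⱼ − vⱼ)/η| ≤ max_{1≤i≤n} |u′ᵢ − uᵢ|/η. -/

import Mathlib

open Finset

lemma sum_exp_pos {n : ℕ} (hn : 0 < n) (f : Fin n → ℝ) :
    0 < ∑ j, Real.exp (f j) := by
  apply Finset.sum_pos (fun j _ => Real.exp_pos _)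
  exact Finset.univ_nonempty_iff.mpr ⟨⟨0, hn⟩⟩

lemma log_sum_exp_sub {n : ℕ} (hn : 0 < n) (f g : Fin n → ℝ) (M : ℝ)
    (h : ∀ j, |g j - f j| ≤ M) :
    |Real.log (∑ j, Real.exp (g j)) - Real.log (∑ j, Real.exp (f j))| ≤ M := by
  have hf := sum_exp_pos hn f
  have hg := sum_exp_pos hn g
  have key : ∀ (p q : Fin n → ℝ), (∀ j, q j - p j ≤ M) →
      Real.log (∑ j, Real.exp (q j)) - Real.log (∑ j, Real.exp (p j)) ≤ M := by
    intro p q hpq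
    have hp := sum_exp_pos hn p
    have hb : (∑ j, Real.exp (q j)) ≤ Real.exp M * ∑ j, Real.exp (p j) := by
      rw [Finset.mul_sum]
      apply Finset.sum_le_sum
      intro j _
      rw [← Real.exp_add]
      exact Real.exp_le_exp.mpr (by linarith [hpq j])
    calc Real.log (∑ j, Real.exp (q j)) - Real.log (∑ j, Real.exp (p j))
        ≤ Real.log (Real.exp M * ∑ j, Real.exp (p j)) - Real.log (∑ j, Real.exp (p j)) := by
          gcongr
          exact sum_exp_pos hn q
      _ = M := by rw [Real.log_mul (Real.exp_ne_zero M) (ne_of_gt hp), Real.log_exp]; ring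
  rw [abs_le]
  constructor
  · have := key g f (fun j => by linarith [abs_le.mp (h j) |>.1])
    linarith
  · exact key f g (fun j => (abs_le.mp (h j)).2)

theorem stmt_3 {n : ℕ} (hn : 2 ≤ n)
    (C : Fin n → Fin n → ℝ) (hC : ∀ i j, 0 ≤ C i j)
    (η : ℝ) (hη : 0 < η) (u v u' v' : Fin n → ℝ) :
    (∀ i, |Real.log ((∑ j, Real.exp ((u' i + v' j - C i j) / η))
          / (∑ j, Real.exp ((u i + v j - C i j) / η)))
        - (u' i - u i) / η| ≤ ‖v' - v‖ / η) ∧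
    (∀ j, |Real.log ((∑ i, Real.exp ((u' i + v' j - C i j) / η))
          / (∑ i, Real.exp ((u i + v j - C i j) / η)))
        - (v' j - v j) / η| ≤ ‖u' - u‖ / η) := by
  have hn0 : 0 < n := by omega
  constructor
  · intro i
    have h1 : (∑ j, Real.exp ((u' i + v' j - C i j) / η))
        = Real.exp ((u' i - u i) / η) * ∑ j, Real.exp ((u i + v' j - C i j) / η) := by
      rw [Finset.mul_sum]
      congr 1; ext j
      rw [← Real.exp_add]
      congr 1; field_simp; ring
    have key := log_sum_exp_sub hn0 (fun j => (u i + v j - C i j) / η)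
      (fun j => (u i + v' j - C i j) / η) (‖v' - v‖ / η) ?_
    · rw [h1, Real.log_div (mul_pos (Real.exp_pos _) (sum_exp_pos hn0 _)).ne' (ne_of_gt (sum_exp_pos hn0 _)),
        Real.log_mul (Real.exp_ne_zero _) (ne_of_gt (sum_exp_pos hn0 _)), Real.log_exp]
      convert key using 2
      all_goals ring
    · intro j
      have hle : |v' j - v j| ≤ ‖v' - v‖ := by
        have := norm_le_pi_norm (v' - v) j
        simpa using this
      have : (u i + v' j - C i j) / η - (u i + v j - C i j) / η = (v' j - v j) / η := by
        field_simp
        ring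
      rw [this, abs_div, abs_of_pos hη]
      exact div_le_div_of_nonneg_right hle hη.le
  · intro j
    have h1 : (∑ i, Real.exp ((u' i + v' j - C i j) / η))
        = Real.exp ((v' j - v j) / η) * ∑ i, Real.exp ((u' i + v j - C i j) / η) := by
      rw [Finset.mul_sum]
      congr 1; ext i
      rw [← Real.exp_add]
      congr 1; field_simp; ring
    have key := log_sum_exp_sub hn0 (fun i => (u i + v j - C i j) / η)
      (fun i => (u' i + v j - C i j) / η) (‖u' - u‖ / η) ?_
    · rw [h1, Real.log_div (mul_pos (Real.exp_pos _) (sum_exp_pos hn0 _)).ne' (ne_of_gt (sum_exp_pos hn0 _)),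
        Real.log_mul (Real.exp_ne_zero _) (ne_of_gt (sum_exp_pos hn0 _)), Real.log_exp]
      convert key using 2
      all_goals ring
    · intro i
      have hle : |u' i - u i| ≤ ‖u' - u‖ := by
        have := norm_le_pi_norm (u' - u) i
        simpa using this
      have : (u' i + v j - C i j) / η - (u i + v j - C i j) / η = (u' i - u i) / η := by
        field_simp
        ring
      rw [this, abs_div, abs_of_pos hη]
      exact div_le_div_of_nonneg_right hle hη.le
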